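/- Let A be a TSM M-automaton over X accepting the subgroup Q ⊆ F, let q be a terminal state of A, and let A_q be the M-automaton obtained from A by changing the initial state to q. Then every word x ∈ X* accepted by A_q satisfies x̄ ∈ Q. -/

import Mathlib

/-- A (nondeterministic) `M`-automaton over the alphabet `X`: a finite directed graph with
a distinguished initial state, a set of terminal states, and finitely many edges labelled by
pairs in `M × X*`. -/
structure MAutomaton (M : Type) [Monoid M] (X : Type) where
  State : Type
  [stateFintype : Fintype State]
  init : State
  terminal : Set State
  edge : State → M × List X → State → Prop
  edgeFinite : {e : State × (M × List X) × State | edge e.1 e.2.1 e.2.2}.Finite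

namespace MAutomaton

variable {M : Type} [Monoid M] {X : Type}

/-- `A.Path p m w q` means there is a path from `p` to `q` labelled `(m, w)`: the
concatenation in order of the `X*`-components of its edge labels is `w`, and the
`M`-components multiply in order to `m`. -/
inductive Path (A : MAutomaton M X) : A.State → M → List X → A.State → Prop
  | nil (p : A.State) : Path A p 1 [] p
  | cons {p q r : A.State} {g h : M} {u w : List X} :
      A.edge p (g, u) q → Path A q h w r → Path A p (g * h) (u ++ w) r

/-- The language accepted by an `M`-automaton: all words `w` such that some path labelled
`(1, w)` leads from the initial state to a terminal state. -/
def Lang (A : MAutomaton M X) : Set (List X) :=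
  {w | ∃ q ∈ A.terminal, A.Path A.init 1 w q}

/-- An `M`-automaton is *terminal state minimal* (TSM) if no `M`-automaton accepting the
same language has strictly fewer terminal states. -/
def TSM (A : MAutomaton M X) : Prop :=
  ∀ B : MAutomaton M X, B.Lang = A.Lang → Nat.card A.terminal ≤ Nat.card B.terminal

/-- Concatenation of paths. -/
lemma Path.trans {A : MAutomaton M X} {p s r : A.State} {m n : M} {u v : List X}
    (h1 : A.Path p m u s) (h2 : A.Path s n v r) :
    A.Path p (m * n) (u ++ v) r := by
  induction h1 with
  | nil p => simpa using h2
  | cons he _ ih =>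
    rw [mul_assoc, List.append_assoc]
    exact Path.cons he (ih h2)

/-- Paths do not depend on the initial state or the terminal set. -/
lemma path_mk_iff {S : Type} {inst : Fintype S} {i i' : S} {T T' : Set S}
    {e : S → M × List X → S → Prop} {he he'} {p : S} {m : M} {w : List X} {r : S} :
    (MAutomaton.mk S i T e he).Path p m w r ↔ (MAutomaton.mk S i' T' e he').Path p m w r := by
  constructor
  · intro h
    exact Path.rec (A := MAutomaton.mk S i T e he) (motive := fun p m w r _ => (MAutomaton.mk S i' T' e he').Path p m w r)
      (fun p => Path.nil (A := MAutomaton.mk S i' T' e he') p)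
      (fun hedge _ ih => Path.cons (A := MAutomaton.mk S i' T' e he') hedge ih) h
  · intro h
    exact Path.rec (A := MAutomaton.mk S i' T' e he') (motive := fun p m w r _ => (MAutomaton.mk S i T e he).Path p m w r)
      (fun p => Path.nil (A := MAutomaton.mk S i T e he) p)
      (fun hedge _ ih => Path.cons (A := MAutomaton.mk S i T e he) hedge ih) h

lemma path_init_iff (A : MAutomaton M X) (i : A.State)
    {p : A.State} {m : M} {w : List X} {r : A.State} :
    ({ A with init := i } : MAutomaton M X).Path p m w r ↔ A.Path p m w r :=
  path_mk_iff

lemma path_term_iff (A : MAutomaton M X) (T : Set A.State)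
    {p : A.State} {m : M} {w : List X} {r : A.State} :
    ({ A with terminal := T } : MAutomaton M X).Path p m w r ↔ A.Path p m w r :=
  path_mk_iff

end MAutomaton

/-- **Lemma 3, first part.** Let `A` be a TSM `M`-automaton accepting the subgroup `Q` of the
free group `F` (generated as a monoid by `X`), let `q` be a terminal state of `A` and let
`A_q` be `A` with initial state changed to `q`. Then every word accepted by `A_q` represents
an element of `Q`. -/
theorem MAutomaton.changed_initial_accepts_subset
    {M : Type} [Monoid M] {F : Type} [Group F] [IsFreeGroup F]
    {X : Type} [Fintype X] (ι : X → F)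
    (hgen : ∀ f : F, ∃ w : List X, (w.map ι).prod = f)
    (Q : Subgroup F) (A : MAutomaton M X)
    (hacc : A.Lang = {w : List X | (w.map ι).prod ∈ Q}) (hmin : A.TSM)
    {q : A.State} (hq : q ∈ A.terminal) :
    ∀ x ∈ ({ A with init := q } : MAutomaton M X).Lang, (x.map ι).prod ∈ Q := by
  intro x hx
  -- Step 1: `q` is reachable from the initial state by a `(1, w)`-path.
  have hreach : ∃ w : List X, A.Path A.init 1 w q := by
    by_contra hn
    push_neg at hn
    set B : MAutomaton M X := { A with terminal := A.terminal \ {q} } with hB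
    have hlang : B.Lang = A.Lang := by
      ext w
      constructor
      · rintro ⟨t, ht, hp⟩
        exact ⟨t, ht.1, (A.path_term_iff _).mp hp⟩
      · rintro ⟨t, ht, hp⟩
        rcases eq_or_ne t q with rfl | hne
        · exact absurd hp (hn w)
        · exact ⟨t, ⟨ht, hne⟩, (A.path_term_iff _).mpr hp⟩
    have hle := hmin B hlang
    haveI : Fintype A.State := A.stateFintype
    have hfin : A.terminal.Finite := A.terminal.toFinite
    have hlt : Nat.card B.terminal < Nat.card A.terminal := by
      rw [Nat.card_coe_set_eq, Nat.card_coe_set_eq]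
      exact Set.ncard_diff_singleton_lt_of_mem hq hfin
    omega
  obtain ⟨w, hw⟩ := hreach
  obtain ⟨t, ht, hp⟩ := hx
  have hp' : A.Path q 1 x t := (A.path_init_iff q).mp hp
  have hwx : A.Path A.init (1 * 1 : M) (w ++ x) t := hw.trans hp'
  rw [one_mul] at hwx
  have hwxQ : ((w ++ x).map ι).prod ∈ Q := by
    have hmem : (w ++ x) ∈ A.Lang := ⟨t, ht, hwx⟩
    rwa [hacc] at hmem
  have hwQ : (w.map ι).prod ∈ Q := by
    have hmem : w ∈ A.Lang := ⟨q, hq, hw⟩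
    rwa [hacc] at hmem
  rw [List.map_append, List.prod_append] at hwxQ
  have hx' := Q.mul_mem (Q.inv_mem hwQ) hwxQ
  rwa [inv_mul_cancel_left] at hx'
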